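/- Let n ≥ 1 and define μ : ℍ^n → ℍ^n by μ(x)_p = (star x_p)·i·x_p. Then: (1) if Σ_{p=1}^n ‖x_p‖² = 1, then every component of μ(x) is purely imaginary and Σ_{p=1}^n ‖μ(x)_p‖ = 1; conversely, for every s ∈ ℍ^n with each s_p purely imaginary and Σ_{p=1}^n ‖s_p‖ = 1, there exists x ∈ ℍ^n with Σ_{p=1}^n ‖x_p‖² = 1 and μ(x) = s; (2) if Σ_p ‖x_p‖² = Σ_p ‖y_p‖² = 1, then μ(x) = μ(y) if and only if there exists t ∈ ℍ^n such that each t_p has zero j-component, zero k-component and ‖t_p‖ = 1, and y_p = t_p·x_p for all p. -/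

import Mathlib

open Finset
open scoped Quaternion

/-- The imaginary unit `i` of the quaternions. -/
def qI : ℍ := ⟨0, 1, 0, 0⟩

/-- A quaternion is a *unit complex* quaternion if its `j`- and `k`-components vanish
and it has norm `1`. -/
def IsUnitComplexQ (z : ℍ) : Prop := z.imJ = 0 ∧ z.imK = 0 ∧ ‖z‖ = 1

/-- The moment map `μ : ℍ^n → ℍ^n`, `μ(x)_p = (star x_p)·i·x_p`. -/
noncomputable def muMap (n : ℕ) (x : Fin n → ℍ) : Fin n → ℍ := fun p => star (x p) * qI * x p

@[simp] lemma qI_re : qI.re = 0 := rfl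
@[simp] lemma qI_imI : qI.imI = 1 := rfl
@[simp] lemma qI_imJ : qI.imJ = 0 := rfl
@[simp] lemma qI_imK : qI.imK = 0 := rfl

lemma norm_sq_eq (q : ℍ) : ‖q‖ ^ 2 = Quaternion.normSq q := by
  rw [sq, ← Quaternion.normSq_eq_norm_mul_self]

lemma norm_qI : ‖qI‖ = 1 := by
  have : Quaternion.normSq qI = 1 := by rw [Quaternion.normSq_def']; simp [qI]
  have h := norm_sq_eq qI
  nlinarith [norm_nonneg qI]

lemma mu_re (q : ℍ) : (star q * qI * q).re = 0 := by
  simp [Quaternion.re_mul, Quaternion.imI_mul, Quaternion.imJ_mul, Quaternion.imK_mul, qI_re, qI_imI, qI_imJ, qI_imK]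
  ring

lemma mu_norm (q : ℍ) : ‖star q * qI * q‖ = ‖q‖ ^ 2 := by
  rw [norm_mul, norm_mul, norm_star, norm_qI, sq]; ring

lemma mu_components (q : ℍ) : star q * qI * q =
    ⟨0, q.re^2 + q.imI^2 - q.imJ^2 - q.imK^2,
      2*(q.imI*q.imJ - q.re*q.imK), 2*(q.re*q.imJ + q.imI*q.imK)⟩ := by
  ext <;> simp [Quaternion.re_mul, Quaternion.imI_mul, Quaternion.imJ_mul,
    Quaternion.imK_mul, qI_re, qI_imI, qI_imJ, qI_imK] <;> ring

lemma surj_aux (s : ℍ) (hre : s.re = 0) :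
    ∃ q : ℍ, ‖q‖ ^ 2 = ‖s‖ ∧ star q * qI * q = s := by
  set r := ‖s‖ with hr
  have hrsq : r ^ 2 = s.imI^2 + s.imJ^2 + s.imK^2 := by
    rw [hr, norm_sq_eq, Quaternion.normSq_def', hre]; ring
  have hrnn : 0 ≤ r := norm_nonneg s
  by_cases hB : r = s.imI
  · refine ⟨show ℍ from ⟨Real.sqrt r, 0, 0, 0⟩, ?_, ?_⟩
    · rw [norm_sq_eq, Quaternion.normSq_def']
      simp [Real.sq_sqrt hrnn]
    · have hCD : s.imJ = 0 ∧ s.imK = 0 := by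
        constructor <;> nlinarith [sq_nonneg s.imJ, sq_nonneg s.imK]
      rw [mu_components]
      ext <;> simp [hre, hCD.1, hCD.2, ← hB, Real.sq_sqrt hrnn]
  · have hBlt : s.imI < r := by
      rcases lt_or_eq_of_le (show s.imI ≤ r by
        nlinarith [sq_nonneg s.imJ, sq_nonneg s.imK, abs_nonneg s.imI]) with h | h
      · exact h
      · exact absurd h.symm hB
    set c := Real.sqrt ((r - s.imI)/2) with hc
    have hc2 : c ^ 2 = (r - s.imI)/2 := Real.sq_sqrt (by linarith)
    have hcpos : 0 < c := Real.sqrt_pos.mpr (by linarith)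
    refine ⟨show ℍ from ⟨s.imK/(2*c), s.imJ/(2*c), c, 0⟩, ?_, ?_⟩
    · rw [norm_sq_eq, Quaternion.normSq_def']
      field_simp
      nlinarith [hc2, hrsq]
    · rw [mu_components]
      ext <;> simp [hre] <;> field_simp <;> nlinarith [hc2, hrsq]

lemma qI_comm (t : ℍ) (hj : t.imJ = 0) (hk : t.imK = 0) : t * qI = qI * t := by
  ext <;> simp [Quaternion.re_mul, Quaternion.imI_mul, Quaternion.imJ_mul,
    Quaternion.imK_mul, qI_re, qI_imI, qI_imJ, qI_imK, hj, hk]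

lemma normSq_one_of_norm_one {t : ℍ} (h : ‖t‖ = 1) : Quaternion.normSq t = 1 := by
  rw [← norm_sq_eq, h, one_pow]

lemma bwd_aux (t x : ℍ) (hj : t.imJ = 0) (hk : t.imK = 0) (hn : ‖t‖ = 1) :
    star (t * x) * qI * (t * x) = star x * qI * x := by
  have h1 : star t * qI = qI * star t :=
    qI_comm (star t) (by simp [hj]) (by simp [hk])
  have h2 : star t * t = 1 := by
    rw [Quaternion.star_mul_self, normSq_one_of_norm_one hn, Quaternion.coe_one]
  calc star (t * x) * qI * (t * x)
      = star x * ((star t * qI) * t) * x := by rw [star_mul]; simp [mul_assoc]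
    _ = star x * ((qI * star t) * t) * x := by rw [h1]
    _ = star x * (qI * (star t * t)) * x := by rw [mul_assoc qI]
    _ = star x * qI * x := by rw [h2, mul_one, mul_assoc]

lemma complex_of_comm (t : ℍ) (h : t * qI = qI * t) : t.imJ = 0 ∧ t.imK = 0 := by
  have hJ := congrArg QuaternionAlgebra.imJ h
  have hK := congrArg QuaternionAlgebra.imK h
  simp [Quaternion.imJ_mul, Quaternion.imK_mul, qI_re, qI_imI, qI_imJ, qI_imK] at hJ hK
  constructor <;> linarith

lemma fwd_aux (x y : ℍ) (hn : ‖x‖ = ‖y‖) (hμ : star x * qI * x = star y * qI * y) :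
    ∃ t : ℍ, t.imJ = 0 ∧ t.imK = 0 ∧ ‖t‖ = 1 ∧ y = t * x := by
  by_cases hx : x = 0
  · have hy : y = 0 := by rw [← norm_eq_zero, ← hn, hx, norm_zero]
    exact ⟨1, by simp, by simp, by simp, by simp [hx, hy]⟩
  · have hxn : ‖x‖ ≠ 0 := norm_ne_zero_iff.mpr hx
    have hsx : star x ≠ 0 := star_ne_zero.mpr hx
    refine ⟨y * x⁻¹, ?_, ?_, ?_, ?_⟩
    rotate_right 2
    · rw [norm_mul, norm_inv, ← hn, mul_inv_cancel₀ hxn]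
    · rw [mul_assoc, inv_mul_cancel₀ hx, mul_one]
    all_goals {
      have hnt : ‖y * x⁻¹‖ = 1 := by
        rw [norm_mul, norm_inv, ← hn, mul_inv_cancel₀ hxn]
      have ht1 : star (y * x⁻¹) * qI * (y * x⁻¹) = qI := by
        rw [star_mul, star_inv₀]
        calc (star x)⁻¹ * star y * qI * (y * x⁻¹)
            = (star x)⁻¹ * ((star y * qI * y) * x⁻¹) := by simp [mul_assoc]
          _ = (star x)⁻¹ * ((star x * qI * x) * x⁻¹) := by rw [hμ]
          _ = qI := by
              simp [mul_assoc, mul_inv_cancel₀ hx, inv_mul_cancel_left₀ hsx]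
      have h2 : y * x⁻¹ * star (y * x⁻¹) = 1 := by
        rw [Quaternion.self_mul_star, normSq_one_of_norm_one hnt, Quaternion.coe_one]
      have hcomm : (y * x⁻¹) * qI = qI * (y * x⁻¹) := by
        calc (y * x⁻¹) * qI = (y * x⁻¹) * (star (y * x⁻¹) * qI * (y * x⁻¹)) := by rw [ht1]
          _ = ((y * x⁻¹) * star (y * x⁻¹)) * qI * (y * x⁻¹) := by simp [mul_assoc]
          _ = qI * (y * x⁻¹) := by rw [h2, one_mul]
      first
      | exact (complex_of_comm _ hcomm).1
      | exact (complex_of_comm _ hcomm).2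
    }

/-- Properties of `μ`: (1) it maps the unit sphere onto the set of purely imaginary
tuples `s` with `Σ ‖s_p‖ = 1`; (2) on the unit sphere, its fibres are exactly the
orbits of the diagonal action of tuples of unit complex quaternions. -/
theorem muMap_properties (n : ℕ) (hn : 1 ≤ n) :
    (∀ x : Fin n → ℍ, (∑ p : Fin n, ‖x p‖ ^ 2 = 1) →
      ((∀ p, (muMap n x p).re = 0) ∧ ∑ p : Fin n, ‖muMap n x p‖ = 1)) ∧
    (∀ s : Fin n → ℍ, (∀ p, (s p).re = 0) → (∑ p : Fin n, ‖s p‖ = 1) →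
      ∃ x : Fin n → ℍ, (∑ p : Fin n, ‖x p‖ ^ 2 = 1) ∧ muMap n x = s) ∧
    (∀ x y : Fin n → ℍ, (∑ p : Fin n, ‖x p‖ ^ 2 = 1) → (∑ p : Fin n, ‖y p‖ ^ 2 = 1) →
      (muMap n x = muMap n y ↔
        ∃ t : Fin n → ℍ, (∀ p, IsUnitComplexQ (t p)) ∧ ∀ p, y p = t p * x p)) := by
  refine ⟨?_, ?_, ?_⟩
  · intro x hx
    refine ⟨fun p => mu_re (x p), ?_⟩
    simp only [muMap, mu_norm]
    exact hx
  · intro s hre hsum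
    choose q hq1 hq2 using fun p => surj_aux (s p) (hre p)
    refine ⟨q, ?_, funext fun p => hq2 p⟩
    simp only [hq1]
    exact hsum
  · intro x y hx hy
    constructor
    · intro h
      have hnorm : ∀ p, ‖x p‖ = ‖y p‖ := by
        intro p
        have h2 : ‖x p‖ ^ 2 = ‖y p‖ ^ 2 := by
          rw [← mu_norm (x p), ← mu_norm (y p)]
          exact congrArg norm (congrFun h p)
        nlinarith [norm_nonneg (x p), norm_nonneg (y p)]
      choose t ht1 ht2 ht3 ht4 using fun p => fwd_aux (x p) (y p) (hnorm p) (congrFun h p)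
      exact ⟨t, fun p => ⟨ht1 p, ht2 p, ht3 p⟩, ht4⟩
    · rintro ⟨t, ht, hyx⟩
      funext p
      show star (x p) * qI * x p = star (y p) * qI * y p
      rw [hyx p]
      exact (bwd_aux (t p) (x p) (ht p).1 (ht p).2.1 (ht p).2.2).symm
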